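/- Let p be a deterministic item pricing for a unit-demand buyer with a finite-support value distribution D, with all items available, and let x* ∈ [0,1]^m be its allocation vector (x*_j = probability item j is sold). For every vector y ∈ [0,1]^m with y_j ≤ x*_j for all j, there exists a randomized item pricing q (a finite distribution over item pricings, each obtained from p by restricting to a subset of items, i.e., setting some prices to +∞) whose expected allocation vector equals y and whose expected revenue equals the inner product y · p. -/

import Mathlib

open scoped Classical

/-- `Buys v p T j` : a unit-demand buyer of type `v`, facing item prices `p` with
available item set `T`, purchases item `j` (least-index maximizer of `v k - p k` over
`T`, provided the maximum utility is nonnegative). -/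
def Buys {m : ℕ} (v p : Fin m → ℝ) (T : Finset (Fin m)) (j : Fin m) : Prop :=
  j ∈ T ∧ 0 ≤ v j - p j ∧ ∀ k ∈ T, v k - p k < v j - p j ∨ (v k - p k = v j - p j ∧ j ≤ k)

/-- Probability that item `j` is sold under pricing `p` restricted to available set `T`. -/
noncomputable def allocD {m k : ℕ} (V : Fin k → Fin m → ℝ) (w : Fin k → ℝ)
    (p : Fin m → ℝ) (T : Finset (Fin m)) (j : Fin m) : ℝ :=
  ∑ t, w t * (if Buys (V t) p T j then (1 : ℝ) else 0)

/-- Expected revenue of pricing `p` restricted to available set `T`. -/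
noncomputable def revD {m k : ℕ} (V : Fin k → Fin m → ℝ) (w : Fin k → ℝ)
    (p : Fin m → ℝ) (T : Finset (Fin m)) : ℝ :=
  ∑ t, w t * ∑ j, (if Buys (V t) p T j then p j else 0)

lemma buys_mono {m : ℕ} {v p : Fin m → ℝ} {T T' : Finset (Fin m)} {j : Fin m}
    (hTT : T ⊆ T') (hj : j ∈ T) (h : Buys v p T' j) : Buys v p T j :=
  ⟨hj, h.2.1, fun k hk => h.2.2 k (hTT hk)⟩

lemma allocD_zero_of_not_mem {m k : ℕ} (V : Fin k → Fin m → ℝ) (w : Fin k → ℝ)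
    (p : Fin m → ℝ) {T : Finset (Fin m)} {j : Fin m} (hj : j ∉ T) :
    allocD V w p T j = 0 := by
  unfold allocD
  apply Finset.sum_eq_zero
  intro t _
  rw [if_neg (fun h => hj h.1), mul_zero]

lemma allocD_mono {m k : ℕ} (V : Fin k → Fin m → ℝ) {w : Fin k → ℝ}
    (hw : ∀ t, 0 ≤ w t) (p : Fin m → ℝ) {T : Finset (Fin m)} {j : Fin m} (hj : j ∈ T) :
    allocD V w p Finset.univ j ≤ allocD V w p T j := by
  apply Finset.sum_le_sum
  intro t _
  apply mul_le_mul_of_nonneg_left _ (hw t)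
  by_cases h : Buys (V t) p Finset.univ j
  · rw [if_pos h, if_pos (buys_mono (Finset.subset_univ T) hj h)]
  · rw [if_neg h]
    split_ifs <;> norm_num

lemma revD_eq {m k : ℕ} (V : Fin k → Fin m → ℝ) (w : Fin k → ℝ)
    (p : Fin m → ℝ) (T : Finset (Fin m)) :
    revD V w p T = ∑ j, allocD V w p T j * p j := by
  unfold revD allocD
  simp only [Finset.mul_sum, Finset.sum_mul]
  rw [Finset.sum_comm]
  refine Finset.sum_congr rfl fun t _ => Finset.sum_congr rfl fun j _ => ?_
  split_ifs <;> ring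

/-- for any `y` componentwise below the allocation vector `x*` of the
deterministic item pricing `p` (all items available), there is a randomized item
pricing — a distribution (weights `β`) over the restrictions `p_T` of `p` to subsets
`T ⊆ [m]` — whose expected allocation is exactly `y` and whose expected revenue is
exactly `y · p`. -/
theorem stmt1 {m k : ℕ} (V : Fin k → Fin m → ℝ) (w : Fin k → ℝ)
    (hw : ∀ t, 0 ≤ w t) (hw1 : ∑ t, w t = 1)
    (p : Fin m → ℝ) (y : Fin m → ℝ)
    (hy0 : ∀ j, 0 ≤ y j) (hyx : ∀ j, y j ≤ allocD V w p Finset.univ j) :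
    ∃ β : Finset (Fin m) → ℝ,
      (∀ T, 0 ≤ β T) ∧
      (∑ T ∈ (Finset.univ : Finset (Fin m)).powerset, β T) = 1 ∧
      (∀ j, ∑ T ∈ (Finset.univ : Finset (Fin m)).powerset, β T * allocD V w p T j = y j) ∧
      (∑ T ∈ (Finset.univ : Finset (Fin m)).powerset, β T * revD V w p T
        = ∑ j, y j * p j) := by
  classical
  set g : Finset (Fin m) → (Fin m → ℝ) := fun T => allocD V w p T with hg
  have hmem : y ∈ convexHull ℝ (Set.range g) := by
    by_contra hy
    obtain ⟨f, u, hfy, hfb⟩ := geometric_hahn_banach_point_closed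
      (convex_convexHull ℝ _) ((Set.finite_range g).isClosed_convexHull (𝕜 := ℝ)) hy
    set a : Fin m → ℝ := fun i => f (fun j => if i = j then (1 : ℝ) else 0) with ha
    have hfz : ∀ z : Fin m → ℝ, f z = ∑ i, z i * a i := by
      intro z
      conv_lhs => rw [pi_eq_sum_univ z]
      rw [map_sum]
      exact Finset.sum_congr rfl fun i _ => by rw [map_smul]; rfl
    set T0 : Finset (Fin m) := Finset.univ.filter (fun i => a i < 0) with hT0
    have hle : f (g T0) ≤ f y := by
      rw [hfz, hfz]
      apply Finset.sum_le_sum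
      intro i _
      by_cases hi : a i < 0
      · have hiT : i ∈ T0 := by simp [hT0, hi]
        have h1 : y i ≤ g T0 i := le_trans (hyx i) (allocD_mono V hw p hiT)
        exact mul_le_mul_of_nonpos_right h1 (le_of_lt hi)
      · have hiT : i ∉ T0 := by simp [hT0, hi]
        have h0 : g T0 i = 0 := allocD_zero_of_not_mem V w p hiT
        rw [h0, zero_mul]
        exact mul_nonneg (hy0 i) (not_lt.1 hi)
    have := hfb (g T0) (subset_convexHull ℝ _ (Set.mem_range_self T0))
    linarith
  rw [convexHull_range_eq_exists_affineCombination] at hmem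
  obtain ⟨s, c, hc0, hc1, hcy⟩ := hmem
  rw [Finset.affineCombination_eq_linear_combination s g c hc1] at hcy
  have hsub : (Finset.univ : Finset (Fin m)).powerset ∩ s = s :=
    Finset.inter_eq_right.mpr fun T _ => Finset.mem_powerset.mpr (Finset.subset_univ T)
  refine ⟨fun T => if T ∈ s then c T else 0, ?_, ?_, ?_, ?_⟩
  · intro T
    dsimp only
    split_ifs with h
    · exact hc0 T h
    · exact le_refl 0
  · dsimp only
    rw [Finset.sum_ite_mem, hsub, hc1]
  · intro j
    have hyj : ∑ T ∈ s, c T * g T j = y j := by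
      have := congrFun hcy j
      simpa [Finset.sum_apply] using this
    calc ∑ T ∈ (Finset.univ : Finset (Fin m)).powerset,
          (if T ∈ s then c T else 0) * allocD V w p T j
        = ∑ T ∈ (Finset.univ : Finset (Fin m)).powerset,
          (if T ∈ s then c T * allocD V w p T j else 0) := by
          refine Finset.sum_congr rfl fun T _ => ?_
          split_ifs <;> simp
      _ = ∑ T ∈ s, c T * allocD V w p T j := by rw [Finset.sum_ite_mem, hsub]
      _ = y j := hyj
  · have halloc : ∀ j, ∑ T ∈ (Finset.univ : Finset (Fin m)).powerset,
        (if T ∈ s then c T else 0) * allocD V w p T j = y j := by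
      intro j
      have hyj : ∑ T ∈ s, c T * g T j = y j := by
        have := congrFun hcy j
        simpa [Finset.sum_apply] using this
      calc ∑ T ∈ (Finset.univ : Finset (Fin m)).powerset,
            (if T ∈ s then c T else 0) * allocD V w p T j
          = ∑ T ∈ (Finset.univ : Finset (Fin m)).powerset,
            (if T ∈ s then c T * allocD V w p T j else 0) := by
            refine Finset.sum_congr rfl fun T _ => ?_
            split_ifs <;> simp
        _ = ∑ T ∈ s, c T * allocD V w p T j := by rw [Finset.sum_ite_mem, hsub]
        _ = y j := hyj
    calc ∑ T ∈ (Finset.univ : Finset (Fin m)).powerset,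
          (if T ∈ s then c T else 0) * revD V w p T
        = ∑ T ∈ (Finset.univ : Finset (Fin m)).powerset,
          ∑ j, ((if T ∈ s then c T else 0) * allocD V w p T j) * p j := by
          refine Finset.sum_congr rfl fun T _ => ?_
          rw [revD_eq, Finset.mul_sum]
          exact Finset.sum_congr rfl fun j _ => by ring
      _ = ∑ j, (∑ T ∈ (Finset.univ : Finset (Fin m)).powerset,
            (if T ∈ s then c T else 0) * allocD V w p T j) * p j := by
          rw [Finset.sum_comm]
          exact Finset.sum_congr rfl fun j _ => (Finset.sum_mul _ _ _).symm
      _ = ∑ j, y j * p j := by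
          exact Finset.sum_congr rfl fun j _ => by rw [halloc j]
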